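/- Let d be a straight pseudo-distance on ℍ, let γ ∈ SL(2,ℝ) (Matrix.SpecialLinearGroup (Fin 2) ℝ) act on ℍ by Möbius transformations, assume d (γ • x) (γ • y) = d x y for all x, y ∈ ℍ, and let p ∈ ℍ satisfy dist p ((γ^n) • p) = n · dist p (γ • p) for all n : ℕ. Then for every continuous map c : ℝ → ℍ and reals a ≤ b with c b = γ • (c a), and for every partition a = t₀ ≤ t₁ ≤ … ≤ tₙ = b, one has Σ_{i<n} d (c tᵢ) (c tᵢ₊₁) ≥ d p (γ • p); in particular the d-length of c over [a,b] is at least d p (γ • p). -/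

import Mathlib

/- STATEMENT 9: Let d be a straight pseudo-distance on ℍ, γ ∈ SL(2,ℝ) acting on ℍ by
Möbius transformations, with d γ-invariant, and let p ∈ ℍ satisfy
dist p ((γ^n) • p) = n · dist p (γ • p) for all n : ℕ. Then for every continuous map
c : ℝ → ℍ and reals a ≤ b with c b = γ • (c a), and every partition
a = t₀ ≤ t₁ ≤ … ≤ tₙ = b, one has Σ_{i<n} d (c tᵢ) (c tᵢ₊₁) ≥ d p (γ • p); in
particular the d-length of c over [a,b] is at least d p (γ • p). -/

open scoped UpperHalfPlane

noncomputable section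

theorem partition_sum_ge_displacement_on_axis
    (d : ℍ → ℍ → ℝ)
    (hpos : ∀ x y : ℍ, 0 ≤ d x y)
    (hrefl : ∀ x : ℍ, d x x = 0)
    (hsymm : ∀ x y : ℍ, d x y = d y x)
    (htri : ∀ x y z : ℍ, d x z ≤ d x y + d y z)
    (hstraight : ∀ x y z : ℍ, dist x y + dist y z = dist x z → d x y + d y z = d x z)
    (γ : Matrix.SpecialLinearGroup (Fin 2) ℝ)
    (hinv : ∀ x y : ℍ, d (γ • x) (γ • y) = d x y)
    (p : ℍ) (hp : ∀ n : ℕ, dist p ((γ ^ n) • p) = n * dist p (γ • p))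
    (c : ℝ → ℍ) (hcont : Continuous c) (a b : ℝ) (hab : a ≤ b)
    (hclosed : c b = γ • (c a))
    (n : ℕ) (t : ℕ → ℝ) (ht0 : t 0 = a) (htn : t n = b)
    (hmono : ∀ i < n, t i ≤ t (i + 1)) :
    ∑ i ∈ Finset.range n, d (c (t i)) (c (t (i + 1))) ≥ d p (γ • p) := by
  -- invariance under powers of γ
  have hinv_pow : ∀ (N : ℕ) (x y : ℍ), d ((γ ^ N) • x) ((γ ^ N) • y) = d x y := by
    intro N
    induction N with
    | zero => intro x y; simp
    | succ k ih =>
      intro x y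
      have : γ ^ (k + 1) = γ ^ k * γ := pow_succ γ k
      rw [this, mul_smul, mul_smul, ih, hinv]
  -- d p (γ^N p) = N * d p (γ p)
  have hpow_d : ∀ N : ℕ, d p ((γ ^ N) • p) = N * d p (γ • p) := by
    intro N
    induction N with
    | zero => simp [hrefl]
    | succ k ih =>
      have hsucc : (γ ^ (k + 1)) • p = (γ ^ k) • (γ • p) := by
        rw [pow_succ, mul_smul]
      have hdistk : dist ((γ ^ k) • p) ((γ ^ (k + 1)) • p) = dist p (γ • p) := by
        rw [hsucc, dist_smul]
      have hdist : dist p ((γ ^ k) • p) + dist ((γ ^ k) • p) ((γ ^ (k + 1)) • p)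
          = dist p ((γ ^ (k + 1)) • p) := by
        rw [hdistk, hp k, hp (k + 1)]
        push_cast; ring
      have := hstraight p ((γ ^ k) • p) ((γ ^ (k + 1)) • p) hdist
      have hdk : d ((γ ^ k) • p) ((γ ^ (k + 1)) • p) = d p (γ • p) := by
        rw [hsucc, hinv_pow]
      rw [← this, ih, hdk]
      push_cast; ring
  -- sum bound by triangle inequality
  have hsum : ∀ m : ℕ, d (c (t 0)) (c (t m))
      ≤ ∑ i ∈ Finset.range m, d (c (t i)) (c (t (i + 1))) := by
    intro m
    induction m with
    | zero => simp [hrefl]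
    | succ k ih =>
      rw [Finset.sum_range_succ]
      exact le_trans (htri _ _ _) (add_le_add_left ih _)
  set x := c a with hx
  set D := d x (γ • x) with hD
  have hDS : D ≤ ∑ i ∈ Finset.range n, d (c (t i)) (c (t (i + 1))) := by
    have := hsum n
    rwa [ht0, htn, hclosed] at this
  -- d x (γ^N x) ≤ N * D
  have hxpow : ∀ N : ℕ, d x ((γ ^ N) • x) ≤ N * D := by
    intro N
    induction N with
    | zero => simp [hrefl]
    | succ k ih =>
      have hsucc : (γ ^ (k + 1)) • x = (γ ^ k) • (γ • x) := by
        rw [pow_succ, mul_smul]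
      calc d x ((γ ^ (k + 1)) • x)
          ≤ d x ((γ ^ k) • x) + d ((γ ^ k) • x) ((γ ^ (k + 1)) • x) := htri _ _ _
        _ ≤ k * D + D := by
            rw [hsucc, hinv_pow]
            exact add_le_add_left ih _
        _ = (k + 1 : ℕ) * D := by push_cast; ring
  -- key inequality for all N
  have hkey : ∀ N : ℕ, (N : ℝ) * d p (γ • p) ≤ N * D + 2 * d p x := by
    intro N
    calc (N : ℝ) * d p (γ • p) = d p ((γ ^ N) • p) := (hpow_d N).symm
      _ ≤ d p x + d x ((γ ^ N) • p) := htri _ _ _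
      _ ≤ d p x + (d x ((γ ^ N) • x) + d ((γ ^ N) • x) ((γ ^ N) • p)) :=
          add_le_add_right (htri _ _ _) _
      _ = d p x + d x ((γ ^ N) • x) + d x p := by rw [hinv_pow]; ring
      _ ≤ d p x + N * D + d x p := by
          have := hxpow N; linarith
      _ = N * D + 2 * d p x := by rw [hsymm x p]; ring
  -- conclude d p (γ • p) ≤ D
  have hfinal : d p (γ • p) ≤ D := by
    by_contra h
    push_neg at h
    obtain ⟨N, hN⟩ := exists_nat_gt (2 * d p x / (d p (γ • p) - D))
    have hpos' : 0 < d p (γ • p) - D := sub_pos.mpr h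
    have h1 : 2 * d p x < N * (d p (γ • p) - D) := by
      rwa [div_lt_iff₀ hpos'] at hN
    have := hkey N
    nlinarith
  exact le_trans hfinal hDS

end
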